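/- Under cluster randomization (the treated set is a uniformly random subset S of the J clusters with |S| = m, 0 < m < J), monotonicity, the exclusion restriction, and n_CO,j ≥ 1 for every cluster j, the cluster-level (Wald) estimator identifies a weighted average of cluster-level CACEs: E[D̄_T − D̄_C] = (1/J)·Σ_{j=1}^J n_CO,j/n_j > 0 and E[Ȳ_T − Ȳ_C] / E[D̄_T − D̄_C] = Σ_{j=1}^J w_CL,j · τ_j, where w_CL,j = (n_CO,j/n_j) / (Σ_{l=1}^J n_CO,l/n_l). -/

import Mathlib

open Finset

/-- Average of `f` over all size-`m` treated subsets of the `J` clusters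
(uniform cluster randomization). -/
noncomputable def clExpect (J m : ℕ) (f : Finset (Fin J) → ℝ) : ℝ :=
  (∑ s ∈ (univ : Finset (Finset (Fin J))).filter (fun s => s.card = m), f s) / (J.choose m)



lemma countOut (J m : ℕ) (j : Fin J) :
    (((univ : Finset (Finset (Fin J))).filter (fun s => s.card = m)).filter
      (fun s => j ∉ s)).card = (J-1).choose m := by
  have : ((univ : Finset (Finset (Fin J))).filter (fun s => s.card = m)).filter
      (fun s => j ∉ s) = (univ.erase j).powersetCard m := by
    ext s
    simp [mem_powersetCard, subset_erase, and_comm]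
  rw [this, card_powersetCard, card_erase_of_mem (mem_univ j), card_univ, Fintype.card_fin]

lemma countIn (J m : ℕ) (hm0 : 0 < m) (hmJ : m < J) (j : Fin J) :
    (((univ : Finset (Finset (Fin J))).filter (fun s => s.card = m)).filter
      (fun s => j ∈ s)).card = (J-1).choose (m-1) := by
  have hcardA : ((univ : Finset (Finset (Fin J))).filter (fun s => s.card = m)).card
      = J.choose m := by
    have : (univ : Finset (Finset (Fin J))).filter (fun s => s.card = m)
        = (univ : Finset (Fin J)).powersetCard m := by
      ext s; simp [mem_powersetCard]
    rw [this, card_powersetCard, card_univ, Fintype.card_fin]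
  have hsplit := Finset.card_filter_add_card_filter_not
    (s := (univ : Finset (Finset (Fin J))).filter (fun s => s.card = m))
    (p := fun s => j ∈ s)
  rw [countOut, hcardA] at hsplit
  have hJ : J = (J-1) + 1 := (Nat.succ_pred_eq_of_pos (by omega)).symm
  have hm : m = (m-1) + 1 := (Nat.succ_pred_eq_of_pos hm0).symm
  have hpascal : J.choose m = (J-1).choose (m-1) + (J-1).choose m := by
    rw [hJ, hm, Nat.choose_succ_succ]
    simp only [Nat.succ_eq_add_one, Nat.add_sub_cancel, ← hm]
  omega

lemma keyExpect (J m : ℕ) (hm0 : 0 < m) (hmJ : m < J) (a b : Fin J → ℝ) :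
    clExpect J m (fun s => (∑ j ∈ s, a j) / (m : ℝ) - (∑ j ∈ sᶜ, b j) / ((J : ℝ) - m))
      = (1 / (J : ℝ)) * ∑ j, (a j - b j) := by
  set A := (univ : Finset (Finset (Fin J))).filter (fun s => s.card = m) with hA
  have hsum1 : ∑ s ∈ A, ∑ j ∈ s, a j = ((J-1).choose (m-1) : ℝ) * ∑ j, a j := by
    have h1 : ∀ s : Finset (Fin J), ∑ j ∈ s, a j
        = ∑ j : Fin J, if j ∈ s then a j else 0 := by
      intro s
      rw [Finset.sum_ite_mem, univ_inter]
    simp_rw [h1]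
    rw [Finset.sum_comm]
    have h2 : ∀ j : Fin J, (∑ s ∈ A, if j ∈ s then a j else 0)
        = ((J-1).choose (m-1) : ℝ) * a j := by
      intro j
      rw [← Finset.sum_filter, Finset.sum_const, countIn J m hm0 hmJ j, nsmul_eq_mul]
    simp_rw [h2]
    rw [← Finset.mul_sum]
    simp
  have hsum2 : ∑ s ∈ A, ∑ j ∈ sᶜ, b j = ((J-1).choose m : ℝ) * ∑ j, b j := by
    have h1 : ∀ s : Finset (Fin J), ∑ j ∈ sᶜ, b j
        = ∑ j : Fin J, if j ∈ sᶜ then b j else 0 := by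
      intro s
      rw [Finset.sum_ite_mem, univ_inter]
    simp_rw [h1]
    rw [Finset.sum_comm]
    have h2 : ∀ j : Fin J, (∑ s ∈ A, if j ∈ sᶜ then b j else 0)
        = ((J-1).choose m : ℝ) * b j := by
      intro j
      rw [← Finset.sum_filter]
      have : A.filter (fun s => j ∈ sᶜ) = A.filter (fun s => j ∉ s) := by
        apply Finset.filter_congr; intro s _; simp
      rw [this, Finset.sum_const, countOut J m j, nsmul_eq_mul]
    simp_rw [h2]
    rw [← Finset.mul_sum]
  have hJ0 : (0:ℝ) < J := by
    have : 0 < J := by omega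
    exact_mod_cast this
  have hm0' : (0:ℝ) < m := by exact_mod_cast hm0
  have hJm : (0:ℝ) < (J:ℝ) - m := by
    have : (m:ℝ) < J := by exact_mod_cast hmJ
    linarith
  have hC0 : (0:ℝ) < (J.choose m : ℝ) := by
    exact_mod_cast Nat.choose_pos hmJ.le
  have hid1 : (J:ℝ) * ((J-1).choose (m-1) : ℝ) = (J.choose m : ℝ) * m := by
    have h := Nat.add_one_mul_choose_eq (J-1) (m-1)
    have e1 : J - 1 + 1 = J := by omega
    have e2 : m - 1 + 1 = m := by omega
    rw [e1, e2] at h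
    exact_mod_cast h
  have hid2 : ((J-1).choose m : ℝ) * J = (J.choose m : ℝ) * ((J:ℝ) - m) := by
    have h := Nat.choose_mul_succ_eq (J-1) m
    have e1 : J - 1 + 1 = J := by omega
    rw [e1] at h
    have hsub : ((J - m : ℕ) : ℝ) = (J:ℝ) - m := by
      exact_mod_cast Nat.cast_sub hmJ.le
    calc ((J-1).choose m : ℝ) * J = ((J-1).choose m * J : ℕ) := by push_cast; ring
      _ = (J.choose m * (J - m) : ℕ) := by exact_mod_cast h
      _ = (J.choose m : ℝ) * ((J:ℝ) - m) := by push_cast [hmJ.le]; ring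
  unfold clExpect
  rw [← hA, Finset.sum_sub_distrib, ← Finset.sum_div, ← Finset.sum_div, hsum1, hsum2]
  have hC1' : ((J-1).choose (m-1) : ℝ) = (J.choose m : ℝ) * m / J := by
    field_simp
    linarith [hid1]
  have hC2' : ((J-1).choose m : ℝ) = (J.choose m : ℝ) * ((J:ℝ) - m) / J := by
    field_simp
    linarith [hid2]
  rw [hC1', hC2']
  rw [Finset.sum_sub_distrib]
  field_simp


/-- Under cluster randomization, monotonicity, the exclusion restriction (outcomes depend
only on treatment received), and at least one complier per cluster, the cluster-level (Wald)
estimator identifies `Σ_j w_CL,j τ_j`, with `E[D̄_T − D̄_C] = (1/J) Σ_j n_CO,j/n_j > 0`. -/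
theorem stmt0
    (J m : ℕ) (hm0 : 0 < m) (hmJ : m < J)
    (n : Fin J → ℕ) (hn : ∀ j, 1 ≤ n j)
    -- potential compliances and potential outcomes (exclusion restriction:
    -- outcomes depend only on the treatment received)
    (D1 D0 : (j : Fin J) → Fin (n j) → Bool)
    (Y : (j : Fin J) → Fin (n j) → Bool → ℝ)
    -- monotonicity: no defiers
    (mono : ∀ j i, D0 j i = true → D1 j i = true)
    -- number of compliers per cluster, at least one in each cluster
    (nCO : Fin J → ℕ)
    (hnCO : ∀ j, nCO j =
      (univ.filter (fun i => D1 j i = true ∧ D0 j i = false)).card)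
    (hnCO1 : ∀ j, 1 ≤ nCO j)
    -- cluster-level CACEs
    (τ : Fin J → ℝ)
    (hτ : ∀ j, τ j =
      (∑ i ∈ univ.filter (fun i => D1 j i = true ∧ D0 j i = false),
        (Y j i true - Y j i false)) / nCO j)
    -- observed cluster means under assignment s
    (Ybar Dbar : Finset (Fin J) → Fin J → ℝ)
    (hYbar : ∀ s j, Ybar s j =
      (∑ i, Y j i (if j ∈ s then D1 j i else D0 j i)) / n j)
    (hDbar : ∀ s j, Dbar s j =
      (∑ i, (if (if j ∈ s then D1 j i else D0 j i) then (1 : ℝ) else 0)) / n j)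
    (YT YC DT DC : Finset (Fin J) → ℝ)
    (hYT : ∀ s, YT s = (∑ j ∈ s, Ybar s j) / m)
    (hYC : ∀ s, YC s = (∑ j ∈ sᶜ, Ybar s j) / ((J : ℝ) - m))
    (hDT : ∀ s, DT s = (∑ j ∈ s, Dbar s j) / m)
    (hDC : ∀ s, DC s = (∑ j ∈ sᶜ, Dbar s j) / ((J : ℝ) - m)) :
    clExpect J m (fun s => DT s - DC s) = (1 / (J : ℝ)) * ∑ j, (nCO j : ℝ) / n j ∧
    0 < clExpect J m (fun s => DT s - DC s) ∧
    clExpect J m (fun s => YT s - YC s) / clExpect J m (fun s => DT s - DC s) =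
      ∑ j, (((nCO j : ℝ) / n j) / (∑ l, (nCO l : ℝ) / n l)) * τ j := by
  have hJ0 : 0 < J := by omega
  -- per-cluster treated/control values
  set aD : Fin J → ℝ := fun j => (∑ i, if D1 j i then (1:ℝ) else 0) / n j with haD
  set bD : Fin J → ℝ := fun j => (∑ i, if D0 j i then (1:ℝ) else 0) / n j with hbD
  set aY : Fin J → ℝ := fun j => (∑ i, Y j i (D1 j i)) / n j with haY
  set bY : Fin J → ℝ := fun j => (∑ i, Y j i (D0 j i)) / n j with hbY
  have hDfun : (fun s => DT s - DC s)
      = fun s => (∑ j ∈ s, aD j) / (m : ℝ) - (∑ j ∈ sᶜ, bD j) / ((J : ℝ) - m) := by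
    funext s
    rw [hDT, hDC]
    congr 1
    · congr 1
      refine Finset.sum_congr rfl fun j hj => ?_
      rw [hDbar]
      simp [hj, haD]
    · congr 1
      refine Finset.sum_congr rfl fun j hj => ?_
      have hj' : j ∉ s := by simpa using hj
      rw [hDbar]
      simp [hj', hbD]
  have hYfun : (fun s => YT s - YC s)
      = fun s => (∑ j ∈ s, aY j) / (m : ℝ) - (∑ j ∈ sᶜ, bY j) / ((J : ℝ) - m) := by
    funext s
    rw [hYT, hYC]
    congr 1
    · congr 1
      refine Finset.sum_congr rfl fun j hj => ?_
      rw [hYbar]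
      simp [hj, haY]
    · congr 1
      refine Finset.sum_congr rfl fun j hj => ?_
      have hj' : j ∉ s := by simpa using hj
      rw [hYbar]
      simp [hj', hbY]
  have hED : clExpect J m (fun s => DT s - DC s) = (1 / (J : ℝ)) * ∑ j, (aD j - bD j) := by
    rw [hDfun]; exact keyExpect J m hm0 hmJ aD bD
  have hEY : clExpect J m (fun s => YT s - YC s) = (1 / (J : ℝ)) * ∑ j, (aY j - bY j) := by
    rw [hYfun]; exact keyExpect J m hm0 hmJ aY bY
  have hdiffD : ∀ j, aD j - bD j = (nCO j : ℝ) / n j := by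
    intro j
    rw [haD, hbD]
    simp only
    rw [div_sub_div_same, ← Finset.sum_sub_distrib]
    congr 1
    have key : ∀ i, ((if D1 j i then (1:ℝ) else 0) - (if D0 j i then 1 else 0))
        = if D1 j i = true ∧ D0 j i = false then 1 else 0 := by
      intro i
      cases hd1 : D1 j i <;> cases hd0 : D0 j i
      · simp
      · exact absurd (mono j i hd0) (by simp [hd1])
      · simp
      · simp
    simp_rw [key]
    rw [Finset.sum_boole, ← hnCO j]
  have hdiffY : ∀ j, aY j - bY j = ((nCO j : ℝ) / n j) * τ j := by
    intro j
    have hnCO0 : ((nCO j : ℝ)) ≠ 0 := by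
      have := hnCO1 j; positivity
    rw [haY, hbY]
    simp only
    rw [div_sub_div_same, ← Finset.sum_sub_distrib]
    have key : ∀ i, (Y j i (D1 j i) - Y j i (D0 j i))
        = if D1 j i = true ∧ D0 j i = false then (Y j i true - Y j i false) else 0 := by
      intro i
      cases hd1 : D1 j i <;> cases hd0 : D0 j i
      · simp
      · exact absurd (mono j i hd0) (by simp [hd1])
      · simp
      · simp
    simp_rw [key]
    rw [← Finset.sum_filter]
    have hnum : (∑ i ∈ univ.filter (fun i => D1 j i = true ∧ D0 j i = false),
        (Y j i true - Y j i false)) = τ j * nCO j := by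
      rw [hτ j, div_mul_cancel₀ _ hnCO0]
    rw [hnum]
    field_simp
  have hsumD : (∑ j, (aD j - bD j)) = ∑ j, (nCO j : ℝ) / n j := by
    exact Finset.sum_congr rfl fun j _ => hdiffD j
  have hsumY : (∑ j, (aY j - bY j)) = ∑ j, ((nCO j : ℝ) / n j) * τ j := by
    exact Finset.sum_congr rfl fun j _ => hdiffY j
  have hED' : clExpect J m (fun s => DT s - DC s)
      = (1 / (J : ℝ)) * ∑ j, (nCO j : ℝ) / n j := by rw [hED, hsumD]
  have hEY' : clExpect J m (fun s => YT s - YC s)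
      = (1 / (J : ℝ)) * ∑ j, ((nCO j : ℝ) / n j) * τ j := by rw [hEY, hsumY]
  haveI : Nonempty (Fin J) := ⟨⟨0, hJ0⟩⟩
  have hSpos : 0 < ∑ l, (nCO l : ℝ) / n l := by
    apply Finset.sum_pos
    · intro l _
      have h1 : (0:ℝ) < (nCO l : ℝ) := by exact_mod_cast hnCO1 l
      have h2 : (0:ℝ) < (n l : ℝ) := by exact_mod_cast hn l
      positivity
    · exact Finset.univ_nonempty
  have hJpos : (0:ℝ) < (J : ℝ) := by exact_mod_cast hJ0
  refine ⟨hED', ?_, ?_⟩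
  · rw [hED']
    exact mul_pos (by positivity) hSpos
  · rw [hED', hEY']
    rw [mul_div_mul_left _ _ (by positivity : (1:ℝ)/(J:ℝ) ≠ 0)]
    rw [eq_comm]
    simp_rw [div_mul_eq_mul_div]
    rw [← Finset.sum_div]
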